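/- Fix n ≥ 1. The following hold for the subalgebra A_n: (i) Q_m(A_n) ⊆ A_n for every m ∈ ℕ; (ii) for every m with 0 ≤ m ≤ n−1, every x ∈ A_n with Q_m(x) = 0 equals Q_m(y) for some y ∈ A_n, so the Margolis homology of A_n with respect to Q_m vanishes; (iii) for every m ≥ n, Q_m vanishes identically on A_n, so the Margolis homology of A_n with respect to Q_m is all of A_n. (Lemma 2.17 of the paper: H(y(n); Q_m) ≅ 0 for 0 ≤ m ≤ n−1 and H(y(n); Q_m) ≅ H_*(y(n)) for m ≥ n.) -/
import Mathlib


/-!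
Let `F₂ := ZMod 2` and `A := MvPolynomial {i : ℕ // 1 ≤ i} F₂`, modeling the mod 2 dual
Steenrod algebra, with Milnor primitives `Q m` as below.  For `n ≥ 1` let `An n ⊆ A` be the
`F₂`-subalgebra generated by `ξ₁, …, ξ_n`, modeling `H_*(y(n); F₂) = F₂[ξ̄₁, …, ξ̄_n]`.

STATEMENT (Lemma 2.17): (i) `Q_m (A_n) ⊆ A_n` for every `m`; (ii) for `0 ≤ m ≤ n - 1`, every
`x ∈ A_n` with `Q_m x = 0` equals `Q_m y` for some `y ∈ A_n` (Margolis homology vanishes);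
(iii) for `m ≥ n`, `Q_m` vanishes identically on `A_n` (Margolis homology is all of `A_n`).
-/

open MvPolynomial

abbrev F₂ : Type := ZMod 2

/-- The mod 2 dual Steenrod algebra, modeled as a polynomial algebra on `ξ_i`, `i ≥ 1`. -/
abbrev A : Type := MvPolynomial {i : ℕ // 1 ≤ i} F₂

/-- The generators `ξ_k`, with the convention `ξ_0 = 1`. -/
noncomputable def ξ (k : ℕ) : A :=
  if h : 1 ≤ k then X (⟨k, h⟩ : {i : ℕ // 1 ≤ i}) else 1

/-- The Milnor primitive `Q_m`, as the unique `F₂`-derivation of `A` with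
`Q_m (ξ_k) = ξ_{k-m-1} ^ (2 ^ (m+1))` for `k ≥ m + 1` and `Q_m (ξ_k) = 0` for `1 ≤ k ≤ m`. -/
noncomputable def Q (m : ℕ) : Derivation F₂ A A :=
  MvPolynomial.mkDerivation F₂ fun i : {i : ℕ // 1 ≤ i} =>
    if m + 1 ≤ i.1 then ξ (i.1 - (m + 1)) ^ 2 ^ (m + 1) else 0

/-- The subalgebra `A_n = F₂[ξ₁, …, ξ_n] ⊆ A`, modeling `H_*(y(n); F₂)`. -/
noncomputable def An (n : ℕ) : Subalgebra F₂ A :=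
  Algebra.adjoin F₂ {y : A | ∃ k : ℕ, 1 ≤ k ∧ k ≤ n ∧ y = ξ k}


lemma xi_mem (n k : ℕ) (hk : k ≤ n) : ξ k ∈ An n := by
  rcases Nat.eq_zero_or_pos k with h | h
  · subst h
    have : ξ 0 = 1 := by simp [ξ]
    rw [this]; exact one_mem _
  · exact Algebra.subset_adjoin ⟨k, h, hk, rfl⟩

lemma Q_xi (m k : ℕ) (hk : 1 ≤ k) :
    Q m (ξ k) = if m + 1 ≤ k then ξ (k - (m + 1)) ^ 2 ^ (m + 1) else 0 := by
  rw [ξ, dif_pos hk, Q, MvPolynomial.mkDerivation_X]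

/-- The Margolis homology of `H_*(y(n); F₂)` vanishes for `0 ≤ m ≤ n - 1` and is all of
`H_*(y(n); F₂)` for `m ≥ n`. -/
theorem margolisHomology_yn (n : ℕ) (hn : 1 ≤ n) :
    (∀ m : ℕ, ∀ x ∈ An n, Q m x ∈ An n) ∧
    (∀ m : ℕ, m ≤ n - 1 → ∀ x ∈ An n, Q m x = 0 → ∃ y ∈ An n, x = Q m y) ∧
    (∀ m : ℕ, n ≤ m → ∀ x ∈ An n, Q m x = 0) := by
  have hmem : ∀ m : ℕ, ∀ x ∈ An n, Q m x ∈ An n := by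
    intro m x hx
    induction hx using Algebra.adjoin_induction with
    | mem y hy =>
      obtain ⟨k, hk1, hkn, rfl⟩ := hy
      rw [Q_xi m k hk1]
      split
      · exact pow_mem (xi_mem n _ (le_trans (Nat.sub_le _ _) hkn)) _
      · exact zero_mem _
    | algebraMap r => rw [Derivation.map_algebraMap]; exact zero_mem _
    | add x y hx hy ihx ihy => rw [map_add]; exact add_mem ihx ihy
    | mul x y hx hy ihx ihy =>
      rw [Derivation.leibniz, smul_eq_mul, smul_eq_mul]
      exact add_mem (mul_mem hx ihy) (mul_mem hy ihx)
  refine ⟨hmem, ?_, ?_⟩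
  · intro m hm x hx hQx
    have hm1 : m + 1 ≤ n := by omega
    have hxi : ξ (m + 1) ∈ An n := xi_mem n _ hm1
    refine ⟨ξ (m + 1) * x, mul_mem hxi hx, ?_⟩
    have hQξ : Q m (ξ (m + 1)) = 1 := by
      rw [Q_xi m (m + 1) (by omega), if_pos le_rfl]
      simp [ξ]
    rw [Derivation.leibniz, smul_eq_mul, smul_eq_mul, hQx, hQξ, mul_zero, mul_one,
      zero_add]
  · intro m hnm x hx
    induction hx using Algebra.adjoin_induction with
    | mem y hy =>
      obtain ⟨k, hk1, hkn, rfl⟩ := hy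
      rw [Q_xi m k hk1, if_neg (by omega)]
    | algebraMap r => rw [Derivation.map_algebraMap]
    | add x y hx hy ihx ihy => rw [map_add, ihx, ihy, add_zero]
    | mul x y hx hy ihx ihy =>
      rw [Derivation.leibniz, ihx, ihy, smul_zero, smul_zero, add_zero]
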